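/- Let σ ∈ S_k and τ ∈ S_n with σ ≤ τ, let ⟨σ⟩ be an occurrence of σ in τ, and suppose the pair (⟨σ⟩, τ) is interval free. Then the Möbius function of the top interval computed in the subposet I(⟨σ⟩, τ) equals the Möbius function computed in the full occurrence poset: μ_{I(⟨σ⟩,τ)}(⟨σ⟩, τ) = μ_{[⟨σ⟩,τ]}(⟨σ⟩, τ). -/

import Mathlib

/-- `f` gives an occurrence of the pattern `σ` in `τ`: the positions `f 0 < f 1 < ⋯`
carry letters of `τ` in the same relative order as `σ`. -/
def IsOccurrence {k n : ℕ} (σ : Equiv.Perm (Fin k)) (τ : Equiv.Perm (Fin n))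
    (f : Fin k → Fin n) : Prop :=
  StrictMono f ∧ ∀ i j : Fin k, σ i < σ j ↔ τ (f i) < τ (f j)

/-- Two sets of kept positions `S, S'` (each containing the marked positions `A`)
determine the same element of the occurrence poset: the words of `τ` read along `S`
and along `S'` are order isomorphic, with the marked positions corresponding. -/
def OccEquiv {n : ℕ} (τ : Equiv.Perm (Fin n)) (A S S' : Finset (Fin n)) : Prop :=
  ∃ g : {x // x ∈ S} ≃o {x // x ∈ S'},
    (∀ a b : {x // x ∈ S}, τ a.1 < τ b.1 ↔ τ (g a).1 < τ (g b).1) ∧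
    (∀ a : {x // x ∈ S}, a.1 ∈ A ↔ (g a).1 ∈ A)

/-- Representatives of elements of the occurrence poset with marked positions `A`
and ground set `U`: sets of kept positions between `A` and `U`. -/
def OccCarrier {n : ℕ} (A U : Finset (Fin n)) := {S : Finset (Fin n) // A ⊆ S ∧ S ⊆ U}

/-- The occurrence poset `[⟨σ⟩, τ]` (with ground set `U`): kept-position sets modulo
order isomorphism respecting the marked occurrence. -/
def OccPoset {n : ℕ} (τ : Equiv.Perm (Fin n)) (A U : Finset (Fin n)) :=
  Quot (fun S S' : OccCarrier A U => OccEquiv τ A S.1 S'.1)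

def occMk {n : ℕ} (τ : Equiv.Perm (Fin n)) (A U : Finset (Fin n)) (S : OccCarrier A U) :
    OccPoset τ A U :=
  Quot.mk _ S

/-- The partial order of the occurrence poset: deletion of unmarked letters. -/
def occLE {n : ℕ} (τ : Equiv.Perm (Fin n)) (A U : Finset (Fin n))
    (q q' : OccPoset τ A U) : Prop :=
  ∃ S S' : OccCarrier A U, q = occMk τ A U S ∧ q' = occMk τ A U S' ∧ S.1 ⊆ S'.1

/-- The bottom element `⟨σ⟩` of the occurrence poset. -/
def occBot {n : ℕ} (τ : Equiv.Perm (Fin n)) (A U : Finset (Fin n)) (h : A ⊆ U) :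
    OccPoset τ A U :=
  occMk τ A U ⟨A, subset_rfl, h⟩

/-- The top element `τ` of the occurrence poset. -/
def occTop {n : ℕ} (τ : Equiv.Perm (Fin n)) (A U : Finset (Fin n)) (h : A ⊆ U) :
    OccPoset τ A U :=
  occMk τ A U ⟨U, h, subset_rfl⟩

/-- `J` is an interval block of the pattern of `τ` restricted to the kept positions `S`:
`J` consists of at least two kept positions, consecutive among `S` both in position and
in value. -/
def IsBlockIn {n : ℕ} (τ : Equiv.Perm (Fin n)) (S J : Finset (Fin n)) : Prop :=
  J ⊆ S ∧ 2 ≤ J.card ∧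
    (∀ x ∈ J, ∀ y ∈ J, ∀ z ∈ S, x ≤ z → z ≤ y → z ∈ J) ∧
    (∀ x ∈ J, ∀ y ∈ J, ∀ z ∈ S, τ x ≤ τ z → τ z ≤ τ y → z ∈ J)

/-- The pair (marked occurrence `A`, permutation given by kept positions `S`) has an
interval block: an interval block disjoint from the occurrence. -/
def PairHasBlock {n : ℕ} (τ : Equiv.Perm (Fin n)) (A S : Finset (Fin n)) : Prop :=
  ∃ J : Finset (Fin n), IsBlockIn τ S J ∧ ∀ p ∈ J, p ∉ A

/-- An element of the occurrence poset is interval free if (a representative of) it has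
no interval block disjoint from the marked occurrence. -/
def occIntervalFree {n : ℕ} (τ : Equiv.Perm (Fin n)) (A U : Finset (Fin n))
    (q : OccPoset τ A U) : Prop :=
  ∃ S : OccCarrier A U, q = occMk τ A U S ∧ ¬ PairHasBlock τ A S.1

theorem OccEquiv.card_eq {n : ℕ} {τ : Equiv.Perm (Fin n)} {A S S' : Finset (Fin n)}
    (h : OccEquiv τ A S S') : S.card = S'.card := by
  obtain ⟨g, -, -⟩ := h
  simpa using Fintype.card_congr g.toEquiv

/-- The rank of an element of the occurrence poset: its number of letters minus `k`. -/
def occRank {n : ℕ} (τ : Equiv.Perm (Fin n)) (A U : Finset (Fin n)) (k : ℕ) :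
    OccPoset τ A U → ℕ :=
  Quot.lift (fun S => S.1.card - k) (fun S S' h => by
    have hc := OccEquiv.card_eq h
    show S.1.card - k = S'.1.card - k
    omega)

/-- Positions `p` and `q` lie in the same region: no position between them (inclusive)
is a marked position. -/
def SameRegion {n : ℕ} (A : Finset (Fin n)) (p q : Fin n) : Prop :=
  ∀ z : Fin n, min p q ≤ z → z ≤ max p q → z ∉ A

/-- The pair (occurrence with marked positions `A`, `τ`) is separated: any two letters in
the same region are separated in value by a letter of the occurrence. -/
def Separated {n : ℕ} (τ : Equiv.Perm (Fin n)) (A : Finset (Fin n)) : Prop :=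
  ∀ p q : Fin n, SameRegion A p q → τ p < τ q → ∃ a ∈ A, τ p < τ a ∧ τ a < τ q

/-- The letters at positions `p, q` (with `τ p < τ q`) are similar: same region, and no
letter of the occurrence lies strictly between them in value. -/
def SimilarPos {n : ℕ} (τ : Equiv.Perm (Fin n)) (A : Finset (Fin n)) (p q : Fin n) : Prop :=
  SameRegion A p q ∧ τ p < τ q ∧ ∀ a ∈ A, ¬ (τ p < τ a ∧ τ a < τ q)

/-- A group of similar letters: at least two letters, pairwise similar. -/
def IsSimilarGroup {n : ℕ} (τ : Equiv.Perm (Fin n)) (A : Finset (Fin n))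
    (G : Finset (Fin n)) : Prop :=
  2 ≤ G.card ∧ ∀ p ∈ G, ∀ q ∈ G, τ p < τ q → SimilarPos τ A p q

/-- A maximal group of similar letters: one contained in no strictly larger group. -/
def IsMaxSimilarGroup {n : ℕ} (τ : Equiv.Perm (Fin n)) (A : Finset (Fin n))
    (G : Finset (Fin n)) : Prop :=
  IsSimilarGroup τ A G ∧ ∀ G' : Finset (Fin n), IsSimilarGroup τ A G' → G ⊆ G' → G' = G

/-- The occurrence poset is a boolean algebra: isomorphic to the poset of all subsets of
a finite set, ordered by inclusion. -/
def IsBooleanOccPoset {n : ℕ} (τ : Equiv.Perm (Fin n)) (A U : Finset (Fin n)) : Prop :=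
  ∃ (m : ℕ) (e : OccPoset τ A U ≃ Finset (Fin m)),
    ∀ q q' : OccPoset τ A U, occLE τ A U q q' ↔ e q ⊆ e q'

/-- The pattern poset `P`: permutations of every length, a permutation of length `m` being
an element of `Equiv.Perm (Fin m)` (its standard form). -/
def PatternPoset := Σ m : ℕ, Equiv.Perm (Fin m)

/-- The order of the pattern poset: pattern containment. -/
def patternLE (a b : PatternPoset) : Prop :=
  ∃ f : Fin a.1 → Fin b.1, IsOccurrence a.2 b.2 f

/-- `b` covers `a` in the pattern poset: `a < b` and `b` has one letter more than `a`. -/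
def patternCovers (a b : PatternPoset) : Prop :=
  patternLE a b ∧ a ≠ b ∧ b.1 = a.1 + 1


section AuxOcc

open Finset

variable {n : ℕ} {τ : Equiv.Perm (Fin n)} {A : Finset (Fin n)}

theorem occEquiv_refl (τ : Equiv.Perm (Fin n)) (A S : Finset (Fin n)) : OccEquiv τ A S S :=
  ⟨OrderIso.refl _, fun _ _ => Iff.rfl, fun _ => Iff.rfl⟩

theorem occEquiv_symm {S S' : Finset (Fin n)} (h : OccEquiv τ A S S') : OccEquiv τ A S' S := by
  obtain ⟨g, h1, h2⟩ := h
  refine ⟨g.symm, fun a b => ?_, fun a => ?_⟩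
  · have := h1 (g.symm a) (g.symm b)
    simpa using this.symm
  · have := h2 (g.symm a)
    simpa using this.symm

theorem occEquiv_trans {S S' S'' : Finset (Fin n)} (h : OccEquiv τ A S S')
    (h' : OccEquiv τ A S' S'') : OccEquiv τ A S S'' := by
  obtain ⟨g, h1, h2⟩ := h
  obtain ⟨g', h1', h2'⟩ := h'
  exact ⟨g.trans g', fun a b => (h1 a b).trans (h1' (g a) (g b)),
    fun a => (h2 a).trans (h2' (g a))⟩

theorem occEquiv_equivalence (τ : Equiv.Perm (Fin n)) (A U : Finset (Fin n)) :
    Equivalence (fun S S' : OccCarrier A U => OccEquiv τ A S.1 S'.1) :=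
  ⟨fun S => occEquiv_refl τ A S.1, occEquiv_symm, occEquiv_trans⟩

theorem occMk_eq_iff {U : Finset (Fin n)} (S S' : OccCarrier A U) :
    occMk τ A U S = occMk τ A U S' ↔ OccEquiv τ A S.1 S'.1 := by
  rw [occMk, occMk]
  exact Quot.eq.trans (occEquiv_equivalence τ A U).eqvGen_iff

end AuxOcc
section AuxImage

open Finset

variable {n : ℕ} {τ : Equiv.Perm (Fin n)} {A : Finset (Fin n)}

/-- Image of a subset of `S` under a map on the subtype of `S`. -/
noncomputable def subImage {S S' : Finset (Fin n)} (g : {x // x ∈ S} → {x // x ∈ S'})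
    (X : Finset (Fin n)) : Finset (Fin n) :=
  (S.attach.filter (fun a => a.1 ∈ X)).image (fun a => (g a).1)

theorem mem_subImage {S S' : Finset (Fin n)} {g : {x // x ∈ S} → {x // x ∈ S'}}
    {X : Finset (Fin n)} {y : Fin n} :
    y ∈ subImage g X ↔ ∃ a : {x // x ∈ S}, a.1 ∈ X ∧ (g a).1 = y := by
  simp [subImage]

theorem subImage_subset {S S' : Finset (Fin n)} (g : {x // x ∈ S} → {x // x ∈ S'})
    (X : Finset (Fin n)) : subImage g X ⊆ S' := by
  intro y hy
  obtain ⟨a, -, rfl⟩ := mem_subImage.1 hy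
  exact (g a).2

theorem subImage_mono {S S' : Finset (Fin n)} (g : {x // x ∈ S} → {x // x ∈ S'})
    {X Y : Finset (Fin n)} (h : X ⊆ Y) : subImage g X ⊆ subImage g Y := by
  intro y hy
  obtain ⟨a, ha, rfl⟩ := mem_subImage.1 hy
  exact mem_subImage.2 ⟨a, h ha, rfl⟩

theorem card_subImage {S S' : Finset (Fin n)} {g : {x // x ∈ S} → {x // x ∈ S'}}
    (hg : Function.Injective g) {X : Finset (Fin n)} (hX : X ⊆ S) :
    (subImage g X).card = X.card := by
  classical
  have hinj : Function.Injective (fun a : {x // x ∈ S} => (g a).1) :=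
    fun a b h => hg (Subtype.ext h)
  rw [subImage, Finset.card_image_of_injective _ hinj]
  have h23 : (S.attach.filter (fun a => a.1 ∈ X)).image (Subtype.val) = X := by
    ext y
    constructor
    · intro hy
      obtain ⟨a, ha, rfl⟩ := Finset.mem_image.1 hy
      exact (Finset.mem_filter.1 ha).2
    · intro hy
      exact Finset.mem_image.2 ⟨⟨y, hX hy⟩,
        Finset.mem_filter.2 ⟨Finset.mem_attach _ _, hy⟩, rfl⟩
  calc (S.attach.filter (fun a => a.1 ∈ X)).card
      = ((S.attach.filter (fun a => a.1 ∈ X)).image (Subtype.val)).card :=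
        (Finset.card_image_of_injective _ Subtype.val_injective).symm
    _ = X.card := by rw [h23]

/-- A good order isomorphism restricts to subsets. -/
theorem OccEquiv.restrict {S S' X : Finset (Fin n)} (h : OccEquiv τ A S S')
    (hX : X ⊆ S) (hAX : A ⊆ X) :
    ∃ Y : Finset (Fin n), Y ⊆ S' ∧ A ⊆ Y ∧ OccEquiv τ A X Y := by
  classical
  obtain ⟨g, h1, h2⟩ := h
  set Y := subImage (fun a => g a) X with hY
  have hYS' : Y ⊆ S' := subImage_subset _ X
  have hginj : Function.Injective (fun a : {x // x ∈ S} => g a) := g.injective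
  -- A ⊆ Y
  have hAsubY : A ⊆ Y := by
    have hsubA : subImage (fun a => g a) A ⊆ A := by
      intro y hy
      obtain ⟨a, ha, rfl⟩ := mem_subImage.1 hy
      exact (h2 a).1 ha
    have hcardA : (subImage (fun a => g a) A).card = A.card :=
      card_subImage hginj (hAX.trans hX)
    have : subImage (fun a => g a) A = A :=
      Finset.eq_of_subset_of_card_le hsubA (le_of_eq hcardA.symm)
    calc A = subImage (fun a => g a) A := this.symm
      _ ⊆ Y := subImage_mono _ hAX
  -- the restricted map
  refine ⟨Y, hYS', hAsubY, ?_⟩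
  have hmemf : ∀ a : {x // x ∈ X}, (g ⟨a.1, hX a.2⟩).1 ∈ Y :=
    fun a => mem_subImage.2 ⟨⟨a.1, hX a.2⟩, a.2, rfl⟩
  set f : {x // x ∈ X} → {x // x ∈ Y} := fun a => ⟨(g ⟨a.1, hX a.2⟩).1, hmemf a⟩ with hf
  have hmono : StrictMono f := by
    intro a b hab
    have hab' : (a : Fin n) < b := Subtype.coe_lt_coe.2 hab
    have h0 : (⟨a.1, hX a.2⟩ : {x // x ∈ S}) < ⟨b.1, hX b.2⟩ := Subtype.mk_lt_mk.2 hab'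
    have h3 := g.lt_iff_lt.2 h0
    exact Subtype.mk_lt_mk.2 (Subtype.coe_lt_coe.2 h3)
  have hsurj : Function.Surjective f := by
    rintro ⟨y, hy⟩
    obtain ⟨a, ha, hgay⟩ := mem_subImage.1 hy
    refine ⟨⟨a.1, ha⟩, ?_⟩
    apply Subtype.ext
    show (g ⟨a.1, _⟩).1 = y
    rwa [show (⟨a.1, hX ha⟩ : {x // x ∈ S}) = a from Subtype.ext rfl]
  refine ⟨hmono.orderIsoOfSurjective f hsurj, fun a b => ?_, fun a => ?_⟩
  · show τ a.1 < τ b.1 ↔ τ ((hmono.orderIsoOfSurjective f hsurj) a).1 < _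
    rw [StrictMono.coe_orderIsoOfSurjective]
    exact h1 ⟨a.1, hX a.2⟩ ⟨b.1, hX b.2⟩
  · show a.1 ∈ A ↔ ((hmono.orderIsoOfSurjective f hsurj) a).1 ∈ A
    rw [StrictMono.coe_orderIsoOfSurjective]
    exact h2 ⟨a.1, hX a.2⟩

end AuxImage
section AuxBlock

open Finset

variable {n : ℕ} {τ : Equiv.Perm (Fin n)} {A : Finset (Fin n)}

theorem PairHasBlock.of_occEquiv {S S' : Finset (Fin n)} (h : OccEquiv τ A S S')
    (hb : PairHasBlock τ A S) : PairHasBlock τ A S' := by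
  classical
  obtain ⟨g, h1, h2⟩ := h
  obtain ⟨J, ⟨hJS, hJ2, hJpos, hJval⟩, hJA⟩ := hb
  have h1le : ∀ a b : {x // x ∈ S}, τ a.1 ≤ τ b.1 ↔ τ (g a).1 ≤ τ (g b).1 := by
    intro a b
    rw [← not_lt, ← not_lt, h1 b a]
  refine ⟨subImage (fun a => g a) J, ⟨subImage_subset _ _, ?_, ?_, ?_⟩, ?_⟩
  · rw [card_subImage g.injective hJS]; exact hJ2
  · rintro x hx y hy z hz hxz hzy
    obtain ⟨a, ha, rfl⟩ := mem_subImage.1 hx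
    obtain ⟨b, hb', rfl⟩ := mem_subImage.1 hy
    set c := g.symm ⟨z, hz⟩ with hc
    have hgc : (g c).1 = z := by rw [hc, g.apply_symm_apply]
    have hac : a ≤ c := g.le_iff_le.1 (by
      rw [← Subtype.coe_le_coe, hgc]; exact hxz)
    have hcb : c ≤ b := g.le_iff_le.1 (by
      rw [← Subtype.coe_le_coe, hgc]; exact hzy)
    have : c.1 ∈ J := hJpos a.1 ha b.1 hb' c.1 c.2
      (Subtype.coe_le_coe.2 hac) (Subtype.coe_le_coe.2 hcb)
    exact mem_subImage.2 ⟨c, this, hgc⟩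
  · rintro x hx y hy z hz hxz hzy
    obtain ⟨a, ha, rfl⟩ := mem_subImage.1 hx
    obtain ⟨b, hb', rfl⟩ := mem_subImage.1 hy
    set c := g.symm ⟨z, hz⟩ with hc
    have hgc : (g c).1 = z := by rw [hc, g.apply_symm_apply]
    have hac : τ a.1 ≤ τ c.1 := (h1le a c).2 (by rw [hgc]; exact hxz)
    have hcb : τ c.1 ≤ τ b.1 := (h1le c b).2 (by rw [hgc]; exact hzy)
    have : c.1 ∈ J := hJval a.1 ha b.1 hb' c.1 c.2 hac hcb
    exact mem_subImage.2 ⟨c, this, hgc⟩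
  · intro p hp
    obtain ⟨a, ha, rfl⟩ := mem_subImage.1 hp
    exact fun hmem => hJA a.1 ha ((h2 a).2 hmem)

/-- Small-intersection lemma: a kept set meeting a block of `S` in at least two
letters inherits a block. -/
theorem pairHasBlock_of_inter {S T J : Finset (Fin n)} (hJ : IsBlockIn τ S J)
    (hJA : ∀ p ∈ J, p ∉ A) (hT : T ⊆ S) (h2 : 2 ≤ (T ∩ J).card) :
    PairHasBlock τ A T := by
  obtain ⟨hJS, hJ2, hJpos, hJval⟩ := hJ
  refine ⟨T ∩ J, ⟨Finset.inter_subset_left, h2, ?_, ?_⟩, ?_⟩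
  · intro x hx y hy z hz hxz hzy
    exact Finset.mem_inter.2 ⟨hz, hJpos x (Finset.mem_inter.1 hx).2 y
      (Finset.mem_inter.1 hy).2 z (hT hz) hxz hzy⟩
  · intro x hx y hy z hz hxz hzy
    exact Finset.mem_inter.2 ⟨hz, hJval x (Finset.mem_inter.1 hx).2 y
      (Finset.mem_inter.1 hy).2 z (hT hz) hxz hzy⟩
  · exact fun p hp => hJA p (Finset.mem_inter.1 hp).2

/-- Swapping the unique block letter of a kept set for another block letter gives an
equivalent kept set. -/
theorem occEquiv_swap {S J T : Finset (Fin n)} (hJ : IsBlockIn τ S J)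
    (hJA : ∀ p ∈ J, p ∉ A) (hTS : T ⊆ S) (hAT : A ⊆ T) {j j₀ : Fin n}
    (hj₀ : j₀ ∈ J) (hTJ : T ∩ J = {j}) :
    OccEquiv τ A T (insert j₀ (T.erase j)) := by
  classical
  obtain ⟨hJS, hJ2, hJpos, hJval⟩ := hJ
  have hjTJ : j ∈ T ∩ J := hTJ ▸ Finset.mem_singleton_self j
  have hjT : j ∈ T := (Finset.mem_inter.1 hjTJ).1
  have hjJ : j ∈ J := (Finset.mem_inter.1 hjTJ).2
  by_cases hjj : j₀ = j
  · subst hjj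
    rw [Finset.insert_erase hjT]
    exact occEquiv_refl τ A T
  · have hj₀T : j₀ ∉ T := by
      intro h
      exact hjj (Finset.mem_singleton.1 (hTJ ▸ Finset.mem_inter.2 ⟨h, hj₀⟩))
    set T' := insert j₀ (T.erase j) with hT'
    have hbJ : ∀ b ∈ T, b ≠ j → b ∉ J := by
      intro b hb hbj hbJ'
      exact hbj (Finset.mem_singleton.1 (hTJ ▸ Finset.mem_inter.2 ⟨hb, hbJ'⟩))
    -- positional key
    have key1 : ∀ b ∈ T, b ≠ j → (b < j ↔ b < j₀) := by
      intro b hb hbj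
      have hbJ' := hbJ b hb hbj
      have hbS := hTS hb
      constructor
      · intro h
        by_contra h'
        push_neg at h'
        exact hbJ' (hJpos j₀ hj₀ j hjJ b hbS h' h.le)
      · intro h
        by_contra h'
        push_neg at h'
        exact hbJ' (hJpos j hjJ j₀ hj₀ b hbS h' h.le)
    -- value key
    have key2 : ∀ b ∈ T, b ≠ j → (τ b < τ j ↔ τ b < τ j₀) := by
      intro b hb hbj
      have hbJ' := hbJ b hb hbj
      have hbS := hTS hb
      constructor
      · intro h
        by_contra h'
        push_neg at h'
        exact hbJ' (hJval j₀ hj₀ j hjJ b hbS h' h.le)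
      · intro h
        by_contra h'
        push_neg at h'
        exact hbJ' (hJval j hjJ j₀ hj₀ b hbS h' h.le)
    have hbj₀ : ∀ b ∈ T, b ≠ j → b ≠ j₀ := fun b hb _ e => hj₀T (e ▸ hb)
    have key1' : ∀ b ∈ T, b ≠ j → (j < b ↔ j₀ < b) := by
      intro b hb hbj
      have h₁ := key1 b hb hbj
      have h₂ := hbj₀ b hb hbj
      constructor
      · intro h
        rcases lt_trichotomy j₀ b with h' | h' | h'
        · exact h'
        · exact absurd h'.symm h₂
        · exact absurd (h₁.2 h') (not_lt.2 h.le)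
      · intro h
        rcases lt_trichotomy j b with h' | h' | h'
        · exact h'
        · exact absurd h'.symm hbj
        · exact absurd (h₁.1 h') (not_lt.2 h.le)
    have hτinj : Function.Injective τ := τ.injective
    have key2' : ∀ b ∈ T, b ≠ j → (τ j < τ b ↔ τ j₀ < τ b) := by
      intro b hb hbj
      have h₁ := key2 b hb hbj
      have h₂ := hbj₀ b hb hbj
      constructor
      · intro h
        rcases lt_trichotomy (τ j₀) (τ b) with h' | h' | h'
        · exact h'
        · exact absurd (hτinj h'.symm) h₂
        · exact absurd (h₁.2 h') (not_lt.2 h.le)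
      · intro h
        rcases lt_trichotomy (τ j) (τ b) with h' | h' | h'
        · exact h'
        · exact absurd (hτinj h'.symm) hbj
        · exact absurd (h₁.1 h') (not_lt.2 h.le)
    have hj₀T' : j₀ ∈ T' := Finset.mem_insert_self _ _
    have hmem2 : ∀ a : {x // x ∈ T}, a.1 ≠ j → a.1 ∈ T' :=
      fun a ha => Finset.mem_insert_of_mem (Finset.mem_erase.2 ⟨ha, a.2⟩)
    set f : {x // x ∈ T} → {x // x ∈ T'} := fun a =>
      if h : a.1 = j then ⟨j₀, hj₀T'⟩ else ⟨a.1, hmem2 a h⟩ with hf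
    have hfval : ∀ a : {x // x ∈ T}, (f a).1 = if a.1 = j then j₀ else a.1 := by
      intro a
      by_cases h : a.1 = j
      · simp [hf, h]
      · simp [hf, h]
    have hmono : StrictMono f := by
      intro a b hab
      have hab' : (a : Fin n) < b := Subtype.coe_lt_coe.2 hab
      rw [← Subtype.coe_lt_coe, hfval a, hfval b]
      by_cases ha : a.1 = j <;> by_cases hb : b.1 = j
      · rw [ha] at hab'; rw [hb] at hab'; exact absurd hab' (lt_irrefl _)
      · rw [if_pos ha, if_neg hb]
        exact (key1' b.1 b.2 hb).1 (ha ▸ hab')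
      · rw [if_neg ha, if_pos hb]
        exact (key1 a.1 a.2 ha).1 (hb ▸ hab')
      · rw [if_neg ha, if_neg hb]; exact hab'
    have hsurj : Function.Surjective f := by
      rintro ⟨y, hy⟩
      rcases Finset.mem_insert.1 hy with h | h
      · exact ⟨⟨j, hjT⟩, Subtype.ext (by rw [hfval]; simp [h.symm])⟩
      · obtain ⟨hyj, hyT⟩ := Finset.mem_erase.1 h
        exact ⟨⟨y, hyT⟩, Subtype.ext (by rw [hfval]; simp [hyj])⟩
    refine ⟨hmono.orderIsoOfSurjective f hsurj, fun a b => ?_, fun a => ?_⟩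
    · show τ a.1 < τ b.1 ↔ τ ((hmono.orderIsoOfSurjective f hsurj) a).1 < _
      rw [StrictMono.coe_orderIsoOfSurjective, hfval a, hfval b]
      by_cases ha : a.1 = j <;> by_cases hb : b.1 = j
      · rw [if_pos ha, if_pos hb, ha, hb]
        exact ⟨fun h => absurd h (lt_irrefl _), fun h => absurd h (lt_irrefl _)⟩
      · rw [if_pos ha, if_neg hb, ha]
        exact key2' b.1 b.2 hb
      · rw [if_neg ha, if_pos hb, hb]
        exact key2 a.1 a.2 ha
      · rw [if_neg ha, if_neg hb]
    · show a.1 ∈ A ↔ ((hmono.orderIsoOfSurjective f hsurj) a).1 ∈ A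
      rw [StrictMono.coe_orderIsoOfSurjective, hfval a]
      by_cases ha : a.1 = j
      · rw [if_pos ha, ha]
        exact ⟨fun h => absurd h (hJA j hjJ), fun h => absurd h (hJA j₀ hj₀)⟩
      · rw [if_neg ha]
end AuxBlock
section AuxPoset

open Finset

variable {n : ℕ} (τ : Equiv.Perm (Fin n)) (A : Finset (Fin n))

/-- Cardinality of (a representative of) an element of the occurrence poset. -/
def occCrd {U : Finset (Fin n)} : OccPoset τ A U → ℕ :=
  Quot.lift (fun S => S.1.card) (fun _ _ h => OccEquiv.card_eq h)

variable {τ A}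

theorem occCrd_mk {U : Finset (Fin n)} (S : OccCarrier A U) :
    occCrd τ A (occMk τ A U S) = S.1.card := rfl

theorem occ_exists_rep {U : Finset (Fin n)} (q : OccPoset τ A U) :
    ∃ S : OccCarrier A U, q = occMk τ A U S := by
  obtain ⟨S, hS⟩ := Quot.exists_rep q
  exact ⟨S, hS.symm⟩

theorem occLE_mk_mk {U : Finset (Fin n)} {S S' : OccCarrier A U} (h : S.1 ⊆ S'.1) :
    occLE τ A U (occMk τ A U S) (occMk τ A U S') :=
  ⟨S, S', rfl, rfl, h⟩

theorem occLE_refl {U : Finset (Fin n)} (q : OccPoset τ A U) : occLE τ A U q q := by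
  obtain ⟨S, rfl⟩ := occ_exists_rep q
  exact occLE_mk_mk subset_rfl

theorem occLE_bot {U : Finset (Fin n)} (h : A ⊆ U) (q : OccPoset τ A U) :
    occLE τ A U (occBot τ A U h) q := by
  obtain ⟨S, rfl⟩ := occ_exists_rep q
  exact ⟨⟨A, subset_rfl, h⟩, S, rfl, rfl, S.2.1⟩

/-- Any element below `q'` has a representative inside a given representative of `q'`. -/
theorem occLE_rep {U : Finset (Fin n)} {q q' : OccPoset τ A U} (S' : OccCarrier A U)
    (hq' : q' = occMk τ A U S') (h : occLE τ A U q q') :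
    ∃ T : OccCarrier A U, q = occMk τ A U T ∧ T.1 ⊆ S'.1 := by
  obtain ⟨T₀, S₀, hq, hq'₀, hsub⟩ := h
  have he : OccEquiv τ A S₀.1 S'.1 := (occMk_eq_iff S₀ S').1 (hq'₀.symm.trans hq')
  obtain ⟨Y, hYS', hAY, hEq⟩ := OccEquiv.restrict he hsub T₀.2.1
  exact ⟨⟨Y, hAY, hYS'.trans S'.2.2⟩, by rw [hq]; exact (occMk_eq_iff _ _).2 hEq, hYS'⟩

theorem occLE_trans {U : Finset (Fin n)} {q q' q'' : OccPoset τ A U}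
    (h : occLE τ A U q q') (h' : occLE τ A U q' q'') : occLE τ A U q q'' := by
  obtain ⟨S, S'', hq', hq'', hsub⟩ := h'
  obtain ⟨T, hqT, hTsub⟩ := occLE_rep S hq' h
  exact ⟨T, S'', hqT, hq'', hTsub.trans hsub⟩

theorem occCrd_lt_of_lt {U : Finset (Fin n)} {q q' : OccPoset τ A U}
    (h : occLE τ A U q q') (hne : q ≠ q') : occCrd τ A q < occCrd τ A q' := by
  obtain ⟨S, S', hq, hq', hsub⟩ := h
  subst hq; subst hq'
  rw [occCrd_mk, occCrd_mk]
  rcases lt_or_eq_of_le (Finset.card_le_card hsub) with h | h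
  · exact h
  · exfalso
    have : S.1 = S'.1 := Finset.eq_of_subset_of_card_le hsub (le_of_eq h.symm)
    exact hne (congrArg _ (Subtype.ext this))

theorem occFree_iff_rep {U : Finset (Fin n)} {q : OccPoset τ A U} (S : OccCarrier A U)
    (hq : q = occMk τ A U S) :
    occIntervalFree τ A U q ↔ ¬ PairHasBlock τ A S.1 := by
  constructor
  · rintro ⟨S₀, h₀, hfree⟩ hb
    have he : OccEquiv τ A S.1 S₀.1 := (occMk_eq_iff S S₀).1 (hq.symm.trans h₀)
    exact hfree (PairHasBlock.of_occEquiv he hb)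
  · intro h
    exact ⟨S, hq, h⟩

theorem occBot_free {U : Finset (Fin n)} (h : A ⊆ U) :
    occIntervalFree τ A U (occBot τ A U h) := by
  refine ⟨⟨A, subset_rfl, h⟩, rfl, ?_⟩
  rintro ⟨J, ⟨hJS, hJ2, -, -⟩, hJA⟩
  have : J = ∅ := Finset.eq_empty_of_forall_notMem (fun p hp => hJA p hp (hJS hp))
  rw [this] at hJ2
  simp at hJ2

/-- Key combinatorial step: an interval-free element lies below `q` iff it lies below the
element obtained from a representative of `q` by collapsing a block to a single letter. -/
theorem occ_free_le_iff {U : Finset (Fin n)} {S : OccCarrier A U} {J : Finset (Fin n)}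
    (hJ : IsBlockIn τ S.1 J) (hJA : ∀ p ∈ J, p ∉ A) {j₀ : Fin n} (hj₀ : j₀ ∈ J)
    (S'' : OccCarrier A U) (hS'' : S''.1 = S.1 \ J.erase j₀)
    {x : OccPoset τ A U} (hx : occIntervalFree τ A U x) :
    occLE τ A U x (occMk τ A U S) ↔ occLE τ A U x (occMk τ A U S'') := by
  classical
  constructor
  · intro h
    obtain ⟨T, hxT, hTS⟩ := occLE_rep S rfl h
    have hfreeT : ¬ PairHasBlock τ A T.1 := (occFree_iff_rep T hxT).1 hx
    have hcard : (T.1 ∩ J).card ≤ 1 := by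
      by_contra hc
      push_neg at hc
      exact hfreeT (pairHasBlock_of_inter hJ hJA hTS hc)
    interval_cases hTJ : (T.1 ∩ J).card
    · -- empty intersection
      have hempty : T.1 ∩ J = ∅ := Finset.card_eq_zero.1 hTJ
      have hsub : T.1 ⊆ S''.1 := by
        intro t ht
        rw [hS'', Finset.mem_sdiff]
        refine ⟨hTS ht, fun htJ => ?_⟩
        have : t ∈ T.1 ∩ J := Finset.mem_inter.2 ⟨ht, Finset.mem_of_mem_erase htJ⟩
        rw [hempty] at this
        exact absurd this (Finset.notMem_empty t)
      exact hxT ▸ occLE_mk_mk hsub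
    · -- singleton intersection
      obtain ⟨j, hj⟩ := Finset.card_eq_one.1 hTJ
      have hjJ : j ∈ J := (Finset.mem_inter.1 (hj ▸ Finset.mem_singleton_self j)).2
      have hjT : j ∈ T.1 := (Finset.mem_inter.1 (hj ▸ Finset.mem_singleton_self j)).1
      have hEq : OccEquiv τ A T.1 (insert j₀ (T.1.erase j)) :=
        occEquiv_swap hJ hJA hTS T.2.1 hj₀ hj
      have hAT' : A ⊆ insert j₀ (T.1.erase j) := by
        intro a ha
        have haj : a ≠ j := fun e => hJA j hjJ (e ▸ ha)
        exact Finset.mem_insert_of_mem (Finset.mem_erase.2 ⟨haj, T.2.1 ha⟩)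
      have hT'sub : insert j₀ (T.1.erase j) ⊆ S''.1 := by
        intro y hy
        rw [hS'', Finset.mem_sdiff]
        rcases Finset.mem_insert.1 hy with h | h
        · subst h
          exact ⟨hJ.1 hj₀, fun hc => (Finset.mem_erase.1 hc).1 rfl⟩
        · obtain ⟨hyj, hyT⟩ := Finset.mem_erase.1 h
          refine ⟨hTS hyT, fun hc => ?_⟩
          have : y ∈ T.1 ∩ J := Finset.mem_inter.2 ⟨hyT, Finset.mem_of_mem_erase hc⟩
          rw [hj] at this
          exact hyj (Finset.mem_singleton.1 this)
      refine occLE_trans (q' := occMk τ A U ⟨insert j₀ (T.1.erase j), hAT',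
        hT'sub.trans S''.2.2⟩) ?_ (occLE_mk_mk hT'sub)
      have : x = occMk τ A U ⟨insert j₀ (T.1.erase j), hAT', hT'sub.trans S''.2.2⟩ := by
        rw [hxT]
        exact (occMk_eq_iff _ _).2 hEq
      rw [this]
      exact occLE_refl _
  · intro h
    refine occLE_trans h (occLE_mk_mk ?_)
    rw [hS'']
    exact Finset.sdiff_subset

end AuxPoset
section AuxMain

open Finset

theorem occ_sum_pred {P : Type*} [Fintype P] (p : P → Prop) [DecidablePred p] (f : P → ℤ) :
    ∑ᶠ x ∈ {x | p x}, f x = ∑ x ∈ Finset.univ.filter p, f x := by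
  rw [← finsum_mem_coe_finset]
  congr 1
  ext x
  simp

variable {n : ℕ} {τ : Equiv.Perm (Fin n)} {A : Finset (Fin n)}

theorem occ_finite : Finite (OccPoset τ A (Finset.univ : Finset (Fin n))) := by
  haveI : Finite (OccCarrier A (Finset.univ : Finset (Fin n))) :=
    Finite.of_injective (fun S => S.1) (fun a b h => Subtype.ext h)
  exact Finite.of_surjective (occMk τ A Finset.univ)
    (fun q => by obtain ⟨S, rfl⟩ := occ_exists_rep q; exact ⟨S, rfl⟩)

theorem mu_bot_eq_zero_of_blocked
    (mu : OccPoset τ A Finset.univ → OccPoset τ A Finset.univ → ℤ)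
    (hrec : ∀ q q', occLE τ A Finset.univ q q' → q ≠ q' →
      mu q q' = - ∑ᶠ x ∈ {x : OccPoset τ A Finset.univ |
        occLE τ A Finset.univ q x ∧ occLE τ A Finset.univ x q' ∧ x ≠ q'}, mu q x) :
    ∀ q, ¬ occIntervalFree τ A Finset.univ q →
      mu (occBot τ A Finset.univ (Finset.subset_univ A)) q = 0 := by
  classical
  letI : Finite (OccPoset τ A (Finset.univ : Finset (Fin n))) := occ_finite
  letI : Fintype (OccPoset τ A (Finset.univ : Finset (Fin n))) := Fintype.ofFinite _
  set bot := occBot τ A Finset.univ (Finset.subset_univ A) with hbot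
  have hbotfree : occIntervalFree τ A Finset.univ bot := occBot_free _
  suffices H : ∀ m q, occCrd τ A q = m → ¬ occIntervalFree τ A Finset.univ q → mu bot q = 0 by
    exact fun q h => H _ q rfl h
  intro m
  induction m using Nat.strong_induction_on with
  | _ m IH =>
  intro q hqm hqb
  obtain ⟨S, hqS⟩ := occ_exists_rep q
  have hblocked : PairHasBlock τ A S.1 :=
    not_not.1 (fun h => hqb ((occFree_iff_rep S hqS).2 h))
  obtain ⟨J, hJ, hJA⟩ := hblocked
  have hJ2 : 2 ≤ J.card := hJ.2.1
  obtain ⟨j₀, hj₀⟩ := Finset.card_pos.1 (lt_of_lt_of_le (by norm_num) hJ2)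
  have hAS'' : A ⊆ S.1 \ J.erase j₀ := by
    intro a ha
    rw [Finset.mem_sdiff]
    exact ⟨S.2.1 ha, fun hc => hJA a (Finset.mem_of_mem_erase hc) ha⟩
  set S'' : OccCarrier A (Finset.univ : Finset (Fin n)) := ⟨S.1 \ J.erase j₀, hAS'', Finset.subset_univ _⟩ with hS''
  set q'' := occMk τ A Finset.univ S'' with hq''
  have hq''le : occLE τ A Finset.univ q'' q := by
    rw [hqS]
    exact occLE_mk_mk Finset.sdiff_subset
  -- cardinalities
  have hcrdq : occCrd τ A q = S.1.card := by rw [hqS]; rfl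
  have hcrdq'' : occCrd τ A q'' = (S.1 \ J.erase j₀).card := rfl
  have herase_ne : (J.erase j₀).Nonempty := by
    rw [← Finset.card_pos, Finset.card_erase_of_mem hj₀]
    omega
  obtain ⟨j₁, hj₁⟩ := herase_ne
  have hcrdlt : occCrd τ A q'' < occCrd τ A q := by
    rw [hcrdq, hcrdq'']
    apply Finset.card_lt_card
    rw [Finset.ssubset_iff_of_subset Finset.sdiff_subset]
    refine ⟨j₁, hJ.1 (Finset.mem_of_mem_erase hj₁), ?_⟩
    rw [Finset.mem_sdiff]
    exact fun hc => hc.2 hj₁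
  have hbotne : bot ≠ q := fun e => hqb (e ▸ hbotfree)
  have hbotle : ∀ x, occLE τ A Finset.univ bot x := occLE_bot _
  have hq''bot : bot ≠ q'' := by
    intro e
    have h1 : occCrd τ A bot = A.card := rfl
    have h2 : occCrd τ A q'' = (S.1 \ J.erase j₀).card := rfl
    have h3 : A.card < (S.1 \ J.erase j₀).card := by
      apply Finset.card_lt_card
      rw [Finset.ssubset_iff_of_subset hAS'']
      refine ⟨j₀, ?_, fun hc => hJA j₀ hj₀ hc⟩
      rw [Finset.mem_sdiff]
      exact ⟨hJ.1 hj₀, fun hc => (Finset.mem_erase.1 hc).1 rfl⟩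
    rw [e, h2] at h1
    omega
  -- the recursion at (bot, q)
  have step1 := hrec bot q (hbotle q) hbotne
  rw [occ_sum_pred] at step1
  have e1 : Finset.univ.filter
        (fun x => occLE τ A Finset.univ bot x ∧ occLE τ A Finset.univ x q ∧ x ≠ q)
      = Finset.univ.filter (fun x => occLE τ A Finset.univ x q ∧ x ≠ q) := by
    apply Finset.filter_congr
    intro x _
    exact ⟨fun h => h.2, fun h => ⟨hbotle x, h⟩⟩
  rw [e1] at step1
  set s1 := Finset.univ.filter (fun x => occLE τ A Finset.univ x q ∧ x ≠ q) with hs1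
  set Fr := occIntervalFree τ A Finset.univ with hFr
  have hsplit1 : ∑ x ∈ s1.filter Fr, mu bot x + ∑ x ∈ s1.filter (fun x => ¬ Fr x), mu bot x
      = ∑ x ∈ s1, mu bot x := Finset.sum_filter_add_sum_filter_not s1 Fr _
  have hzero1 : ∑ x ∈ s1.filter (fun x => ¬ Fr x), mu bot x = 0 := by
    apply Finset.sum_eq_zero
    intro x hx
    rw [Finset.mem_filter, hs1, Finset.mem_filter] at hx
    obtain ⟨⟨-, hle, hne⟩, hnf⟩ := hx
    have := occCrd_lt_of_lt hle hne
    rw [hqm] at this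
    exact IH _ this x rfl hnf
  have e2 : s1.filter Fr = Finset.univ.filter (fun x => Fr x ∧ occLE τ A Finset.univ x q) := by
    ext x
    rw [Finset.mem_filter, hs1, Finset.mem_filter, Finset.mem_filter]
    constructor
    · rintro ⟨⟨hu, hle, -⟩, hf⟩
      exact ⟨hu, hf, hle⟩
    · rintro ⟨hu, hf, hle⟩
      exact ⟨⟨hu, hle, fun e => hqb (e ▸ hf)⟩, hf⟩
  have e3 : Finset.univ.filter (fun x => Fr x ∧ occLE τ A Finset.univ x q)
      = Finset.univ.filter (fun x => Fr x ∧ occLE τ A Finset.univ x q'') := by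
    apply Finset.filter_congr
    intro x _
    constructor
    · rintro ⟨hf, hle⟩
      refine ⟨hf, ?_⟩
      rw [hq'']
      rw [hqS] at hle
      exact (occ_free_le_iff hJ hJA hj₀ S'' rfl hf).1 hle
    · rintro ⟨hf, hle⟩
      refine ⟨hf, ?_⟩
      rw [hqS]
      rw [hq''] at hle
      exact (occ_free_le_iff hJ hJA hj₀ S'' rfl hf).2 hle
  -- sums below q''
  set s2 := Finset.univ.filter (fun x => occLE τ A Finset.univ x q'') with hs2
  have e4 : Finset.univ.filter (fun x => Fr x ∧ occLE τ A Finset.univ x q'') = s2.filter Fr := by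
    rw [hs2, Finset.filter_filter]
    apply Finset.filter_congr
    intro x _
    exact ⟨fun h => ⟨h.2, h.1⟩, fun h => ⟨h.2, h.1⟩⟩
  have hzero2 : ∑ x ∈ s2.filter (fun x => ¬ Fr x), mu bot x = 0 := by
    apply Finset.sum_eq_zero
    intro x hx
    rw [Finset.mem_filter, hs2, Finset.mem_filter] at hx
    obtain ⟨⟨-, hle⟩, hnf⟩ := hx
    have hcx : occCrd τ A x ≤ occCrd τ A q'' := by
      by_cases hxe : x = q''
      · rw [hxe]
      · exact le_of_lt (occCrd_lt_of_lt hle hxe)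
    have : occCrd τ A x < m := by
      rw [← hqm]
      exact lt_of_le_of_lt hcx hcrdlt
    exact IH _ this x rfl hnf
  have hsplit2 : ∑ x ∈ s2.filter Fr, mu bot x + ∑ x ∈ s2.filter (fun x => ¬ Fr x), mu bot x
      = ∑ x ∈ s2, mu bot x := Finset.sum_filter_add_sum_filter_not s2 Fr _
  -- total sum below q'' vanishes
  set s3 := Finset.univ.filter (fun x => occLE τ A Finset.univ x q'' ∧ x ≠ q'') with hs3
  have hq''s3 : q'' ∉ s3 := by
    rw [hs3, Finset.mem_filter]
    rintro ⟨-, -, h⟩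
    exact h rfl
  have e5 : s2 = insert q'' s3 := by
    ext x
    rw [hs2, Finset.mem_filter, Finset.mem_insert, hs3, Finset.mem_filter]
    constructor
    · rintro ⟨hu, hle⟩
      by_cases hxe : x = q''
      · exact Or.inl hxe
      · exact Or.inr ⟨hu, hle, hxe⟩
    · rintro (rfl | ⟨hu, hle, -⟩)
      · exact ⟨Finset.mem_univ _, occLE_refl _⟩
      · exact ⟨hu, hle⟩
  have step2 := hrec bot q'' (hbotle q'') hq''bot
  rw [occ_sum_pred] at step2
  have e6 : Finset.univ.filter
        (fun x => occLE τ A Finset.univ bot x ∧ occLE τ A Finset.univ x q'' ∧ x ≠ q'')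
      = s3 := by
    rw [hs3]
    apply Finset.filter_congr
    intro x _
    exact ⟨fun h => h.2, fun h => ⟨hbotle x, h⟩⟩
  rw [e6] at step2
  have hsum_s2 : ∑ x ∈ s2, mu bot x = 0 := by
    rw [e5, Finset.sum_insert hq''s3, step2]
    ring
  -- put everything together
  rw [step1, ← hsplit1, hzero1, e2, e3, e4]
  have : ∑ x ∈ s2.filter Fr, mu bot x = 0 := by
    have := hsplit2
    rw [hzero2, hsum_s2] at this
    linarith
  rw [this]
  ring

theorem muI_eq_mu_of_free
    (mu : OccPoset τ A Finset.univ → OccPoset τ A Finset.univ → ℤ)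
    (hone : ∀ q, mu q q = 1)
    (hrec : ∀ q q', occLE τ A Finset.univ q q' → q ≠ q' →
      mu q q' = - ∑ᶠ x ∈ {x : OccPoset τ A Finset.univ |
        occLE τ A Finset.univ q x ∧ occLE τ A Finset.univ x q' ∧ x ≠ q'}, mu q x)
    (muI : OccPoset τ A Finset.univ → OccPoset τ A Finset.univ → ℤ)
    (hIone : ∀ q, occIntervalFree τ A Finset.univ q → muI q q = 1)
    (hIrec : ∀ q q', occIntervalFree τ A Finset.univ q → occIntervalFree τ A Finset.univ q' →
      occLE τ A Finset.univ q q' → q ≠ q' →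
      muI q q' = - ∑ᶠ x ∈ {x : OccPoset τ A Finset.univ |
        occIntervalFree τ A Finset.univ x ∧
        occLE τ A Finset.univ q x ∧ occLE τ A Finset.univ x q' ∧ x ≠ q'}, muI q x) :
    ∀ q, occIntervalFree τ A Finset.univ q →
      muI (occBot τ A Finset.univ (Finset.subset_univ A)) q
        = mu (occBot τ A Finset.univ (Finset.subset_univ A)) q := by
  classical
  letI : Finite (OccPoset τ A (Finset.univ : Finset (Fin n))) := occ_finite
  letI : Fintype (OccPoset τ A (Finset.univ : Finset (Fin n))) := Fintype.ofFinite _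
  set bot := occBot τ A Finset.univ (Finset.subset_univ A) with hbot
  have hbotfree : occIntervalFree τ A Finset.univ bot := occBot_free _
  have hbotle : ∀ x, occLE τ A Finset.univ bot x := occLE_bot _
  set Fr := occIntervalFree τ A Finset.univ with hFr
  suffices H : ∀ m q, occCrd τ A q = m → Fr q → muI bot q = mu bot q by
    exact fun q h => H _ q rfl h
  intro m
  induction m using Nat.strong_induction_on with
  | _ m IH =>
  intro q hqm hqf
  by_cases hqbot : q = bot
  · rw [hqbot, hIone bot hbotfree, hone bot]
  · have hbotne : bot ≠ q := fun e => hqbot e.symm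
    have step1 := hIrec bot q hbotfree hqf (hbotle q) hbotne
    rw [occ_sum_pred] at step1
    have e1 : Finset.univ.filter
          (fun x => Fr x ∧ occLE τ A Finset.univ bot x ∧ occLE τ A Finset.univ x q ∧ x ≠ q)
        = Finset.univ.filter (fun x => Fr x ∧ occLE τ A Finset.univ x q ∧ x ≠ q) := by
      apply Finset.filter_congr
      intro x _
      exact ⟨fun h => ⟨h.1, h.2.2⟩, fun h => ⟨h.1, hbotle x, h.2⟩⟩
    rw [e1] at step1
    set s4 := Finset.univ.filter (fun x => Fr x ∧ occLE τ A Finset.univ x q ∧ x ≠ q) with hs4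
    have e2 : ∑ x ∈ s4, muI bot x = ∑ x ∈ s4, mu bot x := by
      apply Finset.sum_congr rfl
      intro x hx
      rw [hs4, Finset.mem_filter] at hx
      obtain ⟨-, hf, hle, hne⟩ := hx
      have := occCrd_lt_of_lt hle hne
      rw [hqm] at this
      exact IH _ this x rfl hf
    set s1 := Finset.univ.filter (fun x => occLE τ A Finset.univ x q ∧ x ≠ q) with hs1
    have e3 : s4 = s1.filter Fr := by
      rw [hs1, Finset.filter_filter, hs4]
      apply Finset.filter_congr
      intro x _
      exact ⟨fun h => ⟨h.2, h.1⟩, fun h => ⟨h.2, h.1⟩⟩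
    have hzero1 : ∑ x ∈ s1.filter (fun x => ¬ Fr x), mu bot x = 0 := by
      apply Finset.sum_eq_zero
      intro x hx
      rw [Finset.mem_filter] at hx
      exact mu_bot_eq_zero_of_blocked mu hrec x hx.2
    have hsplit1 : ∑ x ∈ s1.filter Fr, mu bot x
          + ∑ x ∈ s1.filter (fun x => ¬ Fr x), mu bot x
        = ∑ x ∈ s1, mu bot x := Finset.sum_filter_add_sum_filter_not s1 Fr _
    have step2 := hrec bot q (hbotle q) hbotne
    rw [occ_sum_pred] at step2
    have e4 : Finset.univ.filter
          (fun x => occLE τ A Finset.univ bot x ∧ occLE τ A Finset.univ x q ∧ x ≠ q) = s1 := by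
      rw [hs1]
      apply Finset.filter_congr
      intro x _
      exact ⟨fun h => h.2, fun h => ⟨hbotle x, h⟩⟩
    rw [e4] at step2
    rw [step1, e2, e3, step2]
    rw [← hsplit1, hzero1]
    ring

end AuxMain
/-- if the pair `(⟨σ⟩, τ)` is interval free, then the Möbius function of the
top interval computed in the interval-free subposet `I(⟨σ⟩, τ)` equals the one computed in
the full occurrence poset `[⟨σ⟩, τ]`. -/
theorem mobius_interval_free_subposet_eq {k n : ℕ}
    (σ : Equiv.Perm (Fin k)) (τ : Equiv.Perm (Fin n))
    (f : Fin k → Fin n) (hf : IsOccurrence σ τ f)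
    (A : Finset (Fin n)) (hA : A = Finset.image f Finset.univ)
    (hfree : ¬ PairHasBlock τ A Finset.univ)
    (mu : OccPoset τ A Finset.univ → OccPoset τ A Finset.univ → ℤ)
    (hone : ∀ q, mu q q = 1)
    (hzero : ∀ q q', ¬ occLE τ A Finset.univ q q' → mu q q' = 0)
    (hrec : ∀ q q', occLE τ A Finset.univ q q' → q ≠ q' →
      mu q q' = - ∑ᶠ x ∈ {x : OccPoset τ A Finset.univ |
        occLE τ A Finset.univ q x ∧ occLE τ A Finset.univ x q' ∧ x ≠ q'}, mu q x)
    (muI : OccPoset τ A Finset.univ → OccPoset τ A Finset.univ → ℤ)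
    (hIone : ∀ q, occIntervalFree τ A Finset.univ q → muI q q = 1)
    (hIrec : ∀ q q', occIntervalFree τ A Finset.univ q → occIntervalFree τ A Finset.univ q' →
      occLE τ A Finset.univ q q' → q ≠ q' →
      muI q q' = - ∑ᶠ x ∈ {x : OccPoset τ A Finset.univ | occIntervalFree τ A Finset.univ x ∧
        occLE τ A Finset.univ q x ∧ occLE τ A Finset.univ x q' ∧ x ≠ q'}, muI q x) :
    muI (occBot τ A Finset.univ (Finset.subset_univ A))
        (occTop τ A Finset.univ (Finset.subset_univ A)) =
      mu (occBot τ A Finset.univ (Finset.subset_univ A))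
        (occTop τ A Finset.univ (Finset.subset_univ A)) := by
  have htopfree : occIntervalFree τ A Finset.univ (occTop τ A Finset.univ (Finset.subset_univ A)) :=
    (occFree_iff_rep (⟨Finset.univ, Finset.subset_univ A, subset_rfl⟩ :
      OccCarrier A (Finset.univ : Finset (Fin n))) rfl).2 hfree
  exact muI_eq_mu_of_free mu hone hrec muI hIone hIrec _ htopfree
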